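/- For λ ∈ ℝ let Λ : ℝ⁴ → ℝ⁴ be the linear map with matrix [[cosh λ, sinh λ, 0, 0], [sinh λ, cosh λ, 0, 0], [0, 0, 1, 0], [0, 0, 0, 1]] (a pure Lorentz boost), and let V₊ := {x ∈ ℝ⁴ : x₀ ≥ 0 and x₀² − x₁² − x₂² − x₃² ≥ 0} be the forward light cone (the positive cone of the Bloch-ball state space Ω := {(1, x₁, x₂, x₃) : x₁² + x₂² + x₃² ≤ 1}). Then: Λ is self-adjoint and positive-definite with respect to the Euclidean inner product; Λ(V₊) = V₊; and yet, for λ ≠ 0, the extreme point x := (1, 0, 1, 0) of Ω satisfies Λ x ≠ μ • x for every μ ∈ ℝ. Hence a strictly positive linear map preserving the positive cone need not fix the extreme rays when Ω has infinitely many extreme points. -/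

import Mathlib

open RealInnerProductSpace

/-- The forward light cone in `ℝ⁴`, the positive cone of the Bloch-ball state space. -/
def lightCone : Set (EuclideanSpace ℝ (Fin 4)) :=
  {x | 0 ≤ x 0 ∧ x 1 ^ 2 + x 2 ^ 2 + x 3 ^ 2 ≤ x 0 ^ 2}

/-- The Bloch-ball state space `Ω = {(1, x₁, x₂, x₃) : x₁² + x₂² + x₃² ≤ 1}`. -/
def blochBall : Set (EuclideanSpace ℝ (Fin 4)) :=
  {x | x 0 = 1 ∧ x 1 ^ 2 + x 2 ^ 2 + x 3 ^ 2 ≤ 1}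

/-- The extreme point `x = (1, 0, 1, 0)` of the Bloch ball. -/
noncomputable def blochPoint : EuclideanSpace ℝ (Fin 4) :=
  (WithLp.equiv 2 (Fin 4 → ℝ)).symm ![1, 0, 1, 0]

lemma abs_sinh_lt_cosh' (l : ℝ) : |Real.sinh l| < Real.cosh l := by
  nlinarith [Real.cosh_sq_sub_sinh_sq l, Real.cosh_pos l, abs_nonneg (Real.sinh l),
    sq_abs (Real.sinh l)]

lemma blochBall_mem_eq (z : EuclideanSpace ℝ (Fin 4)) (hz : z ∈ blochBall) (h2 : z 2 = 1) :
    z = blochPoint := by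
  obtain ⟨h0, hsum⟩ := hz
  have h1 : z 1 = 0 := by
    have : z 1 ^ 2 = 0 := le_antisymm (by nlinarith [sq_nonneg (z 3)]) (sq_nonneg _)
    exact pow_eq_zero_iff (by norm_num) |>.mp this
  have h3 : z 3 = 0 := by
    have : z 3 ^ 2 = 0 := le_antisymm (by nlinarith [sq_nonneg (z 1)]) (sq_nonneg _)
    exact pow_eq_zero_iff (by norm_num) |>.mp this
  ext i
  fin_cases i <;> simp_all [blochPoint]

set_option maxHeartbeats 2000000 in
/-- **Counterexample (appendix of the paper).** The pure Lorentz boost `Λ` is a strictly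
positive linear map with `Λ(V₊) = V₊` for the forward light cone, yet for `λ ≠ 0` it does
not fix the extreme ray through `(1, 0, 1, 0)` of the Bloch ball. -/
theorem lorentzBoost_counterexample
    (l : ℝ) (L : EuclideanSpace ℝ (Fin 4) →ₗ[ℝ] EuclideanSpace ℝ (Fin 4))
    (hL0 : ∀ x, L x 0 = Real.cosh l * x 0 + Real.sinh l * x 1)
    (hL1 : ∀ x, L x 1 = Real.sinh l * x 0 + Real.cosh l * x 1)
    (hL2 : ∀ x, L x 2 = x 2) (hL3 : ∀ x, L x 3 = x 3) :
    (∀ x y : EuclideanSpace ℝ (Fin 4), ⟪x, L y⟫ = ⟪L x, y⟫) ∧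
    (∀ x : EuclideanSpace ℝ (Fin 4), x ≠ 0 → 0 < ⟪x, L x⟫) ∧
    L '' lightCone = lightCone ∧
    blochPoint ∈ Set.extremePoints ℝ blochBall ∧
    (l ≠ 0 → ∀ μ : ℝ, L blochPoint ≠ μ • blochPoint) := by
  set c := Real.cosh l with hc
  set s := Real.sinh l with hs
  have hcs : |s| < c := abs_sinh_lt_cosh' l
  have hcpos : 0 < c := Real.cosh_pos l
  have hsq : c ^ 2 - s ^ 2 = 1 := Real.cosh_sq_sub_sinh_sq l
  have hle1 : s ≤ |s| := le_abs_self s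
  have hle2 : -|s| ≤ s := neg_abs_le s
  refine ⟨?_, ?_, ?_, ?_, ?_⟩
  · -- self-adjoint
    intro x y
    simp only [PiLp.inner_apply, RCLike.inner_apply, Fin.sum_univ_four, conj_trivial,
      hL0, hL1, hL2, hL3]
    ring
  · -- positive definite
    intro x hx
    have hex : ∃ i, x i ≠ 0 := by
      by_contra h
      push_neg at h
      exact hx (PiLp.ext (fun i => by simpa using h i))
    have hinner : ⟪x, L x⟫ = c * (x 0 ^ 2 + x 1 ^ 2) + 2 * s * (x 0 * x 1)
        + x 2 ^ 2 + x 3 ^ 2 := by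
      simp only [PiLp.inner_apply, RCLike.inner_apply, Fin.sum_univ_four, conj_trivial,
        hL0, hL1, hL2, hL3]
      ring
    rw [hinner]
    obtain ⟨i, hi⟩ := hex
    have hm : 0 < c - |s| := by linarith
    have hp1 : 0 ≤ (c + s - (c - |s|)) * (x 0 + x 1) ^ 2 :=
      mul_nonneg (by linarith) (sq_nonneg _)
    have hp2 : 0 ≤ (c - s - (c - |s|)) * (x 0 - x 1) ^ 2 :=
      mul_nonneg (by linarith) (sq_nonneg _)
    have tac : ∀ j : Fin 4, x j ≠ 0 → 0 < x j ^ 2 := fun j hj => by positivity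
    fin_cases i
    · have h0 : 0 < x 0 ^ 2 := tac 0 hi
      nlinarith [hp1, hp2, mul_pos hm h0, mul_nonneg hm.le (sq_nonneg (x 0)),
        mul_nonneg hm.le (sq_nonneg (x 1)), sq_nonneg (x 2), sq_nonneg (x 3)]
    · have h0 : 0 < x 1 ^ 2 := tac 1 hi
      nlinarith [hp1, hp2, mul_pos hm h0, mul_nonneg hm.le (sq_nonneg (x 0)),
        mul_nonneg hm.le (sq_nonneg (x 1)), sq_nonneg (x 2), sq_nonneg (x 3)]
    · have h0 : 0 < x 2 ^ 2 := tac 2 hi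
      nlinarith [hp1, hp2, mul_nonneg hm.le (sq_nonneg (x 0)),
        mul_nonneg hm.le (sq_nonneg (x 1)), h0, sq_nonneg (x 3)]
    · have h0 : 0 < x 3 ^ 2 := tac 3 hi
      nlinarith [hp1, hp2, mul_nonneg hm.le (sq_nonneg (x 0)),
        mul_nonneg hm.le (sq_nonneg (x 1)), sq_nonneg (x 2), h0]
  · -- image of light cone
    ext y
    constructor
    · rintro ⟨x, ⟨hx0, hxs⟩, rfl⟩
      have hx1 : |x 1| ≤ x 0 := by
        nlinarith [sq_abs (x 1), abs_nonneg (x 1), sq_nonneg (x 2), sq_nonneg (x 3)]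
      constructor
      · rw [hL0]
        nlinarith [neg_abs_le (s * x 1), abs_mul s (x 1),
          mul_le_mul hcs.le hx1 (abs_nonneg _) hcpos.le]
      · rw [hL0, hL1, hL2, hL3]
        have key : (c * x 0 + s * x 1) ^ 2 - (s * x 0 + c * x 1) ^ 2
            = x 0 ^ 2 - x 1 ^ 2 := by
          linear_combination (x 0 ^ 2 - x 1 ^ 2) * hsq
        linarith
    · intro hy
      obtain ⟨hy0, hys⟩ := hy
      have hy1 : |y 1| ≤ y 0 := by
        nlinarith [sq_abs (y 1), abs_nonneg (y 1), sq_nonneg (y 2), sq_nonneg (y 3)]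
      refine ⟨(WithLp.equiv 2 (Fin 4 → ℝ)).symm ![c * y 0 - s * y 1,
        -(s * y 0) + c * y 1, y 2, y 3], ⟨?_, ?_⟩, ?_⟩
      · show (0:ℝ) ≤ c * y 0 - s * y 1
        nlinarith [le_abs_self (s * y 1), abs_mul s (y 1),
          mul_le_mul hcs.le hy1 (abs_nonneg _) hcpos.le]
      · show (-(s * y 0) + c * y 1) ^ 2 + y 2 ^ 2 + y 3 ^ 2 ≤ (c * y 0 - s * y 1) ^ 2
        have key : (c * y 0 - s * y 1) ^ 2 - (-(s * y 0) + c * y 1) ^ 2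
            = y 0 ^ 2 - y 1 ^ 2 := by
          linear_combination (y 0 ^ 2 - y 1 ^ 2) * hsq
        linarith
      · ext i
        fin_cases i
        · show L _ 0 = y 0
          rw [hL0]
          show c * (c * y 0 - s * y 1) + s * (-(s * y 0) + c * y 1) = y 0
          linear_combination y 0 * hsq
        · show L _ 1 = y 1
          rw [hL1]
          show s * (c * y 0 - s * y 1) + c * (-(s * y 0) + c * y 1) = y 1
          linear_combination y 1 * hsq
        · show L _ 2 = y 2
          rw [hL2]; rfl
        · show L _ 3 = y 3
          rw [hL3]; rfl
  · -- blochPoint is extreme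
    constructor
    · constructor
      · simp [blochPoint, blochBall]
      · show (0:ℝ) ^ 2 + 1 ^ 2 + 0 ^ 2 ≤ 1
        norm_num
    · intro x₁ hx₁ x₂ hx₂ hseg
      obtain ⟨a, b, ha, hb, hab, hx⟩ := hseg
      have hcoord : ∀ i, a * x₁ i + b * x₂ i = blochPoint i := fun i => by
        have := congrArg (fun v => v i) hx; simpa using this
      have h2 := hcoord 2
      have hbp2 : blochPoint 2 = 1 := by simp [blochPoint]
      rw [hbp2] at h2
      have hu : x₁ 2 ≤ 1 := by nlinarith [hx₁.2, sq_nonneg (x₁ 1), sq_nonneg (x₁ 3)]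
      have hv : x₂ 2 ≤ 1 := by nlinarith [hx₂.2, sq_nonneg (x₂ 1), sq_nonneg (x₂ 3)]
      have hu1 : x₁ 2 = 1 := by nlinarith [mul_nonneg hb.le (sub_nonneg.2 hv)]
      have hv1 : x₂ 2 = 1 := by nlinarith [mul_nonneg ha.le (sub_nonneg.2 hu)]
      exact blochBall_mem_eq x₁ hx₁ hu1
  · -- does not fix the extreme ray
    intro hl μ h
    have h1 : L blochPoint 1 = (μ • blochPoint) 1 := congrArg (fun v => v 1) h
    rw [hL1] at h1
    have hb0 : blochPoint 0 = 1 := by simp [blochPoint]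
    have hb1 : blochPoint 1 = 0 := by simp [blochPoint]
    rw [hb0, hb1] at h1
    simp only [PiLp.smul_apply, hb1, smul_eq_mul, mul_zero] at h1
    have : s = 0 := by linarith
    exact hl (Real.sinh_eq_zero.mp (hs ▸ this))
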